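/- (Theorem 3.3(2), pointwise form) Let dim V = 2n and let W ⊆ V be a subspace with dim W = n. Then [the restriction of g to W is nondegenerate and J(W) ⊆ W^{⊥g} (W is a Lagrangian subspace with respect to g)] if and only if [W = W^{⊥g̃} (W is totally lightlike with respect to g̃) and the bilinear pairing (x, y) ↦ g̃(J x, y) on W × W is nondegenerate (J(W) is a lightlike transversal space for W with respect to g̃)]. -/

import Mathlib

/-- For a bilinear form `h` on `V` and a subspace `W`, the `h`-orthogonal space
`W^{⊥h} = {v ∈ V : h(v, w) = 0 for all w ∈ W}`. -/
def perpBilin {V : Type*} [AddCommGroup V] [Module ℝ V]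
    (h : V →ₗ[ℝ] V →ₗ[ℝ] ℝ) (W : Submodule ℝ V) : Submodule ℝ V where
  carrier := {v | ∀ w ∈ W, h v w = 0}
  add_mem' := by
    intro a b ha hb w hw
    simp [ha w hw, hb w hw]
  zero_mem' := by
    intro w hw
    simp
  smul_mem' := by
    intro c a ha w hw
    simp [ha w hw]

theorem mem_perpBilin {V : Type*} [AddCommGroup V] [Module ℝ V]
    (h : V →ₗ[ℝ] V →ₗ[ℝ] ℝ) (W : Submodule ℝ V) (v : V) :
    v ∈ perpBilin h W ↔ ∀ w ∈ W, h v w = 0 := Iff.rfl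

/-- **Theorem 3.3(2), pointwise form.** Let `dim V = 2n` and
`dim W = n`.  Then `W` is a Lagrangian subspace with respect to `g` (i.e. `g│W`
nondegenerate and `J(W) ⊆ W^{⊥g}`) if and only if `W = W^{⊥g̃}` (`W` is totally
lightlike with respect to the associated metric `g̃ = g ∘ J`) and the pairing
`(x, y) ↦ g̃(Jx, y)` on `W × W` is nondegenerate (`J(W)` is a lightlike
transversal space for `W` with respect to `g̃`). -/
theorem lagrangian_iff_totally_lightlike
    (V : Type*) [AddCommGroup V] [Module ℝ V] [FiniteDimensional ℝ V]
    (J : V →ₗ[ℝ] V) (hJ : ∀ x, J (J x) = -x)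
    (g : V →ₗ[ℝ] V →ₗ[ℝ] ℝ)
    (hsymm : ∀ x y, g x y = g y x)
    (hnd : ∀ x, (∀ y, g x y = 0) → x = 0)
    (hN : ∀ x y, g (J x) (J y) = -g x y)
    (n : ℕ) (hdim : Module.finrank ℝ V = 2 * n)
    (W : Submodule ℝ V) (hW : Module.finrank ℝ W = n) :
    (W ⊓ perpBilin g W = ⊥ ∧ Submodule.map J W ≤ perpBilin g W) ↔
      (W = perpBilin (g ∘ₗ J) W ∧
       (∀ x ∈ W, (∀ y ∈ W, g (J (J x)) y = 0) → x = 0) ∧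
       (∀ y ∈ W, (∀ x ∈ W, g (J (J x)) y = 0) → y = 0)) := by
  set B : LinearMap.BilinForm ℝ V := g ∘ₗ J with hB
  have hBapp : ∀ x y, B x y = g (J x) y := fun x y => rfl
  -- g̃ is symmetric
  have hBs : ∀ x y, B x y = B y x := by
    intro x y
    have h1 := hN x (J y)
    rw [hJ y] at h1
    simp only [map_neg, LinearMap.neg_apply] at h1
    -- h1 : -(g (J x) y) = - g x (J y)
    have h2 : g (J x) y = g x (J y) := by linarith
    rw [hBapp, hBapp, h2, hsymm]
  have hBrefl : B.IsRefl := fun x y h => by rwa [hBs]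
  -- g̃ is nondegenerate
  have hBnd : B.Nondegenerate := by
    refine (LinearMap.IsRefl.nondegenerate_iff_separatingLeft hBrefl).mpr ?_
    intro x hx
    have hJx : J x = 0 := hnd _ fun y => hx y
    have := hJ x
    rw [hJx, map_zero] at this
    exact neg_eq_zero.mp this.symm
  -- perpBilin B W is the bilinear-form orthogonal of W
  have hperp : perpBilin B W = B.orthogonal W := by
    ext v
    constructor
    · intro hv w hw
      exact hBrefl v w (hv w hw)
    · intro hv w hw
      exact hBrefl w v (hv w hw)
  constructor
  · rintro ⟨hinf, hmap⟩
    have hWle : W ≤ perpBilin B W := by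
      intro x hx w hw
      have : J x ∈ perpBilin g W := hmap ⟨x, hx, rfl⟩
      exact this w hw
    have hrank : Module.finrank ℝ (perpBilin B W) = n := by
      rw [hperp, LinearMap.BilinForm.finrank_orthogonal hBnd W, hdim, hW]
      omega
    have hWeq : W = perpBilin B W :=
      Submodule.eq_of_le_of_finrank_le hWle (by rw [hrank, hW])
    refine ⟨hWeq, ?_, ?_⟩
    · intro x hx hxy
      have hxperp : x ∈ perpBilin g W := by
        intro y hy
        have := hxy y hy
        rw [hJ x] at this
        simp only [map_neg, LinearMap.neg_apply] at this
        linarith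
      have : x ∈ W ⊓ perpBilin g W := ⟨hx, hxperp⟩
      rw [hinf] at this
      exact this
    · intro y hy hxy
      have hyperp : y ∈ perpBilin g W := by
        intro x hx
        have := hxy x hx
        rw [hJ x] at this
        simp only [map_neg, LinearMap.neg_apply] at this
        have : g x y = 0 := by linarith
        rw [hsymm]; exact this
      have : y ∈ W ⊓ perpBilin g W := ⟨hy, hyperp⟩
      rw [hinf] at this
      exact this
  · rintro ⟨hWeq, hp1, _⟩
    constructor
    · rw [Submodule.eq_bot_iff]
      rintro x ⟨hx, hxperp⟩
      refine hp1 x hx fun y hy => ?_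
      rw [hJ x]
      simp only [map_neg, LinearMap.neg_apply]
      rw [hxperp y hy]
      ring
    · rintro _ ⟨x, hx, rfl⟩ w hw
      have : x ∈ perpBilin B W := hWeq ▸ hx
      exact this w hw
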